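/- Let G be a graph without isolated edges whose edge set admits a 2-colouring with colours red and blue such that the red subgraph R satisfies χ(R) ≤ r and the blue subgraph B satisfies χ(B) ≤ b, where r ≥ 3 and b ≥ 3. Then G admits such a 2-colouring in which additionally neither the red subgraph nor the blue subgraph contains an isolated edge. -/

import Mathlib

open Classical in
/-- Degree of `v` in `G` (classical, so usable for arbitrary subgraphs). -/
noncomputable def deg {V : Type*} [Fintype V] (G : SimpleGraph V) (v : V) : ℕ :=
  G.degree v

open Classical in
/-- Weighted degree (sum) of `v` under edge weighting `w`. -/
noncomputable def wdeg {V : Type*} [Fintype V] (G : SimpleGraph V) (w : Sym2 V → ℕ) (v : V) : ℕ :=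
  ∑ e ∈ G.incidenceFinset v, w e

/-- `G` has no `K₂`-component: every edge is adjacent to some other edge. -/
def NoIsolatedEdge {V : Type*} (G : SimpleGraph V) : Prop :=
  ∀ u v, G.Adj u v → ∃ x, (G.Adj u x ∧ x ≠ v) ∨ (G.Adj v x ∧ x ≠ u)

/-- `G` admits a neighbour-sum-distinguishing edge weighting with weights in {1,2,3}. -/
def Fulfills123 {V : Type*} [Fintype V] (G : SimpleGraph V) : Prop :=
  ∃ w : Sym2 V → ℕ, (∀ e ∈ G.edgeSet, w e = 1 ∨ w e = 2 ∨ w e = 3) ∧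
    ∀ u v, G.Adj u v → wdeg G w u ≠ wdeg G w v

section IsoAux

open SimpleGraph

variable {V : Type*}

/-- `b` is the only neighbour of `a` in `H`. -/
def onlyNbr (H : SimpleGraph V) (a b : V) : Prop := ∀ c, H.Adj a c → c = b

/-- `e` is an isolated edge of `H`. -/
def isoE (H : SimpleGraph V) (e : Sym2 V) : Prop :=
  e ∈ H.edgeSet ∧ ∀ v ∈ e, ∀ c, H.Adj v c → c ∈ e

/-- The finset of isolated edges of `H`. -/
noncomputable def isoF [Fintype V] (H : SimpleGraph V) : Finset (Sym2 V) :=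
  (Set.toFinite {e | isoE H e}).toFinset

lemma mem_isoF [Fintype V] {H : SimpleGraph V} {e : Sym2 V} :
    e ∈ isoF H ↔ isoE H e := Set.Finite.mem_toFinset _

lemma supAdjL {H K : SimpleGraph V} {a c : V} (h : H.Adj a c) : (H ⊔ K).Adj a c := by
  rw [sup_adj]; exact Or.inl h

lemma supAdjR {H K : SimpleGraph V} {a c : V} (h : K.Adj a c) : (H ⊔ K).Adj a c := by
  rw [sup_adj]; exact Or.inr h

lemma supCases {H K : SimpleGraph V} {a c : V} (h : (H ⊔ K).Adj a c) :
    H.Adj a c ∨ K.Adj a c := by rwa [sup_adj] at h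

lemma sdiffMk {H K : SimpleGraph V} {a c : V} (h1 : H.Adj a c) (h2 : ¬ K.Adj a c) :
    (H \ K).Adj a c := by rw [sdiff_adj]; exact ⟨h1, h2⟩

lemma sdiffCases {H K : SimpleGraph V} {a c : V} (h : (H \ K).Adj a c) :
    H.Adj a c ∧ ¬ K.Adj a c := by rwa [sdiff_adj] at h

lemma disjoint_iff_adj {R B : SimpleGraph V} :
    Disjoint R B ↔ ∀ a b, R.Adj a b → ¬ B.Adj a b := by
  rw [disjoint_iff]
  constructor
  · intro h a b hR hB
    have h2 : (R ⊓ B).Adj a b := by rw [inf_adj]; exact ⟨hR, hB⟩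
    rw [h] at h2
    simp at h2
  · intro h
    ext a b
    simp only [inf_adj, bot_adj, iff_false, not_and]
    exact fun hR => h a b hR

lemma noIso_of_empty [Fintype V] {H : SimpleGraph V} (h : isoF H = ∅) :
    NoIsolatedEdge H := by
  intro u v hadj
  by_contra hcon
  have hm : s(u, v) ∈ isoF H := by
    rw [mem_isoF]
    refine ⟨(mem_edgeSet _).2 hadj, ?_⟩
    intro a ha c hc
    rw [Sym2.mem_iff] at ha ⊢
    by_contra hcc
    push_neg at hcc
    rcases ha with rfl | rfl
    · exact hcon ⟨c, Or.inl ⟨hc, hcc.2⟩⟩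
    · exact hcon ⟨c, Or.inr ⟨hc, hcc.1⟩⟩
  rw [h] at hm
  exact absurd hm (Finset.notMem_empty _)

lemma pick2 {n : ℕ} (hn : 3 ≤ n) (a b : Fin n) : ∃ c : Fin n, c ≠ a ∧ c ≠ b := by
  classical
  have h1 : ({a, b} : Finset (Fin n)).card ≤ 2 :=
    (Finset.card_insert_le _ _).trans (by simp)
  have h2 : (({a, b} : Finset (Fin n))ᶜ).Nonempty := by
    rw [← Finset.card_pos, Finset.card_compl, Fintype.card_fin]
    omega
  obtain ⟨c, hc⟩ := h2
  simp only [Finset.mem_compl, Finset.mem_insert, Finset.mem_singleton, not_or] at hc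
  exact ⟨c, hc.1, hc.2⟩

lemma step_core {V : Type*} [Fintype V] {G R B : SimpleGraph V} {r b : ℕ}
    (hr : 3 ≤ r) (hb : 3 ≤ b)
    (hdisj : Disjoint R B) (hsup : R ⊔ B = G)
    (hRc : R.Colorable r) (hBc : B.Colorable b)
    {u v x : V} (huv : R.Adj u v) (hu : onlyNbr R u v) (hv : onlyNbr R v u)
    (hx : B.Adj u x) :
    ∃ R' B' : SimpleGraph V, Disjoint R' B' ∧ R' ⊔ B' = G ∧
      R'.Colorable r ∧ B'.Colorable b ∧
      (isoF R').card + (isoF B').card < (isoF R).card + (isoF B).card := by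
  classical
  have hDJ : ∀ a c, R.Adj a c → ¬ B.Adj a c := disjoint_iff_adj.1 hdisj
  have huvB : ¬ B.Adj u v := hDJ u v huv
  have hxv : x ≠ v := fun h => huvB (h ▸ hx)
  have hxu : x ≠ u := fun h => B.loopless.irrefl u (h ▸ hx)
  have hvu : v ≠ u := huv.ne.symm
  have huv_iso : s(u, v) ∈ isoF R := by
    rw [mem_isoF]
    refine ⟨(mem_edgeSet _).2 huv, ?_⟩
    intro a ha c hc
    rw [Sym2.mem_iff] at ha ⊢
    rcases ha with rfl | rfl
    · exact Or.inr (hu c hc)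
    · exact Or.inl (hv c hc)
  by_cases hc1 : (B ⊔ edge u v).Colorable b
  · -- Move 1 : recolour the isolated red edge `uv` blue.
    have he : edge u v ≤ R := by
      intro a c h
      rw [edge_adj] at h
      rcases h.1 with ⟨rfl, rfl⟩ | ⟨rfl, rfl⟩
      · exact huv
      · exact huv.symm
    refine ⟨R \ edge u v, B ⊔ edge u v, ?_, ?_, hRc.mono_left sdiff_le, hc1, ?_⟩
    · rw [disjoint_iff_adj]
      intro a c hra hba
      have hra' := sdiffCases hra
      rcases supCases hba with hba' | hba'
      · exact hDJ a c hra'.1 hba'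
      · exact hra'.2 hba'
    · rw [sup_comm B (edge u v), ← sup_assoc, sdiff_sup_cancel he, hsup]
    · have hsubR : isoF (R \ edge u v) ⊆ (isoF R).erase s(u, v) := by
        intro f hf
        induction f using Sym2.ind with
        | _ p q =>
          rw [mem_isoF] at hf
          have hpq := sdiffCases ((mem_edgeSet _).1 hf.1)
          have hne : s(p, q) ≠ s(u, v) := by
            intro h
            have h2 := sdiffCases ((mem_edgeSet _).1 (h ▸ hf.1))
            exact h2.2 ((edge_adj u v u v).2 ⟨Or.inl ⟨rfl, rfl⟩, huv.ne⟩)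
          have hpu : p ≠ u := by
            rintro rfl
            exact hne (by rw [hu q hpq.1])
          have hqu : q ≠ u := by
            rintro rfl
            exact hne (by rw [hu p hpq.1.symm, Sym2.eq_swap])
          have hpv : p ≠ v := by
            rintro rfl
            exact hne (by rw [hv q hpq.1, Sym2.eq_swap])
          have hqv : q ≠ v := by
            rintro rfl
            exact hne (by rw [hv p hpq.1.symm])
          rw [Finset.mem_erase, mem_isoF]
          refine ⟨hne, (mem_edgeSet _).2 hpq.1, ?_⟩
          intro a ha c hc
          have hedge : ¬ (edge u v).Adj a c := by
            rw [edge_adj]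
            rintro ⟨(⟨rfl, rfl⟩ | ⟨rfl, rfl⟩), -⟩ <;>
              rw [Sym2.mem_iff] at ha <;> tauto
          exact hf.2 a ha c (sdiffMk hc hedge)
      have hsubB : isoF (B ⊔ edge u v) ⊆ isoF B := by
        intro f hf
        induction f using Sym2.ind with
        | _ p q =>
          rw [mem_isoF] at hf ⊢
          have hpq := supCases ((mem_edgeSet _).1 hf.1)
          have hnu : u ∉ s(p, q) := by
            intro hmem
            have hxmem : x ∈ s(p, q) := hf.2 u hmem x (supAdjL hx)
            have hvmem : v ∈ s(p, q) :=
              hf.2 u hmem v (supAdjR ((edge_adj u v u v).2 ⟨Or.inl ⟨rfl, rfl⟩, huv.ne⟩))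
            rw [Sym2.mem_iff] at hmem hxmem hvmem
            rcases hmem with rfl | rfl <;> rcases hxmem with rfl | rfl <;>
              rcases hvmem with rfl | rfl <;> first
              | exact hxu rfl
              | exact hvu rfl
              | exact hxv rfl
          have hB : B.Adj p q := by
            rcases hpq with h | h
            · exact h
            · rw [edge_adj] at h
              exfalso
              rcases h.1 with ⟨rfl, rfl⟩ | ⟨rfl, rfl⟩
              · exact hnu (Sym2.mem_mk_left _ _)
              · exact hnu (Sym2.mem_mk_right _ _)
          exact ⟨(mem_edgeSet _).2 hB, fun a ha c hc => hf.2 a ha c (supAdjL hc)⟩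
      have h1 : (isoF (R \ edge u v)).card < (isoF R).card :=
        lt_of_le_of_lt (Finset.card_le_card hsubR) (Finset.card_erase_lt_of_mem huv_iso)
      have h2 : (isoF (B ⊔ edge u v)).card ≤ (isoF B).card := Finset.card_le_card hsubB
      omega
  · -- Move 1 is blocked.
    by_cases hgood : ∃ y, B.Adj u y ∧
        (∀ w, B.Adj u w → w ≠ y → (∃ c, B.Adj u c ∧ c ≠ w ∧ c ≠ y) ∨ (∃ c, B.Adj w c ∧ c ≠ u)) ∧
        (∀ z, B.Adj y z → z ≠ u → (∃ c, B.Adj y c ∧ c ≠ z ∧ c ≠ u) ∨ (∃ c, B.Adj z c ∧ c ≠ y))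
    · -- Move 2 : recolour the blue edge `uy` red.
      obtain ⟨y, hy, hSu, hSx⟩ := hgood
      have hyu : y ≠ u := fun h => B.loopless.irrefl u (h ▸ hy)
      have hyv : y ≠ v := fun h => huvB (h ▸ hy)
      have he : edge u y ≤ B := by
        intro a c h
        rw [edge_adj] at h
        rcases h.1 with ⟨rfl, rfl⟩ | ⟨rfl, rfl⟩
        · exact hy
        · exact hy.symm
      have headj : (edge u y).Adj u y := (edge_adj u y u y).2 ⟨Or.inl ⟨rfl, rfl⟩, hyu.symm⟩
      refine ⟨R ⊔ edge u y, B \ edge u y, ?_, ?_, ?_, hBc.mono_left sdiff_le, ?_⟩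
      · rw [disjoint_iff_adj]
        intro a c hra hba
        have hba' := sdiffCases hba
        rcases supCases hra with hra' | hra'
        · exact hDJ a c hra' hba'.1
        · exact hba'.2 hra'
      · rw [sup_assoc, sup_comm (edge u y) (B \ edge u y), sdiff_sup_cancel he, hsup]
      · -- red colourability after adding `uy` : recolour `u`.
        obtain ⟨C⟩ := hRc
        obtain ⟨γ, hγv, hγy⟩ := pick2 hr (C v) (C y)
        refine ⟨SimpleGraph.Coloring.mk (fun t => if t = u then γ else C t) ?_⟩
        intro a c hac
        rcases supCases hac with hac | hac
        · by_cases hau : a = u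
          · have hcv : c = v := hu c (hau ▸ hac)
            rw [if_pos hau, hcv, if_neg hvu]
            exact hγv
          · by_cases hcu : c = u
            · have hav : a = v := hu a (hcu ▸ hac.symm)
              rw [if_pos hcu, hav, if_neg hvu]
              exact fun h => hγv h.symm
            · rw [if_neg hau, if_neg hcu]
              exact C.valid hac
        · rw [edge_adj] at hac
          rcases hac.1 with ⟨ha', hc'⟩ | ⟨ha', hc'⟩
          · rw [if_pos ha', hc', if_neg hyu]
            exact hγy
          · rw [ha', if_neg hyu, if_pos hc']
            exact fun h => hγy h.symm
      · have hsubR : isoF (R ⊔ edge u y) ⊆ (isoF R).erase s(u, v) := by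
          intro f hf
          induction f using Sym2.ind with
          | _ p q =>
            rw [mem_isoF] at hf
            have hpq := supCases ((mem_edgeSet _).1 hf.1)
            have hnu : u ∉ s(p, q) := by
              intro hmem
              have hv2 : v ∈ s(p, q) := hf.2 u hmem v (supAdjL huv)
              have hy2 : y ∈ s(p, q) := hf.2 u hmem y (supAdjR headj)
              rw [Sym2.mem_iff] at hmem hv2 hy2
              rcases hmem with rfl | rfl <;> rcases hv2 with rfl | rfl <;>
                rcases hy2 with rfl | rfl <;> first
                | exact hvu rfl
                | exact hyv rfl
                | exact hyu rfl
            have hR : R.Adj p q := by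
              rcases hpq with h | h
              · exact h
              · rw [edge_adj] at h
                exfalso
                rcases h.1 with ⟨rfl, rfl⟩ | ⟨rfl, rfl⟩
                · exact hnu (Sym2.mem_mk_left _ _)
                · exact hnu (Sym2.mem_mk_right _ _)
            rw [Finset.mem_erase, mem_isoF]
            refine ⟨?_, (mem_edgeSet _).2 hR, fun a ha c hc => hf.2 a ha c (supAdjL hc)⟩
            intro h
            exact hnu (h ▸ Sym2.mem_mk_left u v)
        have no_u : ∀ w, B.Adj u w → w ≠ y → ¬ isoE (B \ edge u y) s(u, w) := by
          intro w hw hwy hiso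
          rcases hSu w hw hwy with ⟨c', h1, h2, h3⟩ | ⟨c', h1, h2⟩
          · have hadj' : (B \ edge u y).Adj u c' := by
              refine sdiffMk h1 ?_
              rw [edge_adj]
              rintro ⟨⟨-, rfl⟩ | ⟨rfl, -⟩, -⟩
              · exact h3 rfl
              · exact hyu rfl
            have hm := hiso.2 u (Sym2.mem_mk_left _ _) c' hadj'
            rw [Sym2.mem_iff] at hm
            rcases hm with rfl | rfl
            · exact h1.ne rfl
            · exact h2 rfl
          · have hadj' : (B \ edge u y).Adj w c' := by
              refine sdiffMk h1 ?_
              rw [edge_adj]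
              rintro ⟨⟨rfl, -⟩ | ⟨-, rfl⟩, -⟩
              · exact hw.ne rfl
              · exact h2 rfl
            have hm := hiso.2 w (Sym2.mem_mk_right _ _) c' hadj'
            rw [Sym2.mem_iff] at hm
            rcases hm with rfl | rfl
            · exact h2 rfl
            · exact h1.ne rfl
        have no_y : ∀ z, B.Adj y z → z ≠ u → ¬ isoE (B \ edge u y) s(y, z) := by
          intro z hz hzu hiso
          rcases hSx z hz hzu with ⟨c', h1, h2, h3⟩ | ⟨c', h1, h2⟩
          · have hadj' : (B \ edge u y).Adj y c' := by
              refine sdiffMk h1 ?_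
              rw [edge_adj]
              rintro ⟨⟨rfl, -⟩ | ⟨-, rfl⟩, -⟩
              · exact hyu rfl
              · exact h3 rfl
            have hm := hiso.2 y (Sym2.mem_mk_left _ _) c' hadj'
            rw [Sym2.mem_iff] at hm
            rcases hm with rfl | rfl
            · exact h1.ne rfl
            · exact h2 rfl
          · have hadj' : (B \ edge u y).Adj z c' := by
              refine sdiffMk h1 ?_
              rw [edge_adj]
              rintro ⟨⟨rfl, -⟩ | ⟨rfl, -⟩, -⟩
              · exact hzu rfl
              · exact hz.ne' rfl
            have hm := hiso.2 z (Sym2.mem_mk_right _ _) c' hadj'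
            rw [Sym2.mem_iff] at hm
            rcases hm with rfl | rfl
            · exact h2 rfl
            · exact h1.ne rfl
        have hsubB : isoF (B \ edge u y) ⊆ isoF B := by
          intro f hf
          induction f using Sym2.ind with
          | _ p q =>
            rw [mem_isoF] at hf ⊢
            have hpq0 : (B \ edge u y).Adj p q := (mem_edgeSet _).1 hf.1
            have hpq := sdiffCases hpq0
            refine ⟨(mem_edgeSet _).2 hpq.1, ?_⟩
            intro a ha c hc
            by_cases hedge : (edge u y).Adj a c
            · exfalso
              have hdecomp : ∃ w, s(p, q) = s(a, w) ∧ (B \ edge u y).Adj a w := by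
                rw [Sym2.mem_iff] at ha
                rcases ha with rfl | rfl
                · exact ⟨q, rfl, hpq0⟩
                · exact ⟨p, Sym2.eq_swap, hpq0.symm⟩
              obtain ⟨w, hfw, haw⟩ := hdecomp
              rw [hfw] at hf
              have haw' := sdiffCases haw
              rw [edge_adj] at hedge
              rcases hedge.1 with ⟨rfl, rfl⟩ | ⟨rfl, rfl⟩
              · refine no_u w haw'.1 ?_ hf
                rintro rfl
                exact haw'.2 headj
              · refine no_y w haw'.1 ?_ hf
                rintro rfl
                exact haw'.2 headj.symm
            · exact hf.2 a ha c (sdiffMk hc hedge)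
        have h1 : (isoF (R ⊔ edge u y)).card < (isoF R).card :=
          lt_of_le_of_lt (Finset.card_le_card hsubR) (Finset.card_erase_lt_of_mem huv_iso)
        have h2 : (isoF (B \ edge u y)).card ≤ (isoF B).card := Finset.card_le_card hsubB
        omega
    · -- no good blue edge at `u` : we show `B ⊔ edge u v` is colourable after all.
      exfalso
      apply hc1
      have hns : ∀ t, B.Adj u t →
          ¬ (∀ w, B.Adj u w → w ≠ t → (∃ c, B.Adj u c ∧ c ≠ w ∧ c ≠ t) ∨ (∃ c, B.Adj w c ∧ c ≠ u)) ∨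
          ¬ (∀ z, B.Adj t z → z ≠ u → (∃ c, B.Adj t c ∧ c ≠ z ∧ c ≠ u) ∨ (∃ c, B.Adj z c ∧ c ≠ t)) := by
        intro t ht
        by_contra h
        push_neg at h
        exact hgood ⟨t, ht, h.1, h.2⟩
      by_cases hstar : ∃ x₀ w, B.Adj u x₀ ∧ B.Adj u w ∧ w ≠ x₀ ∧ onlyNbr B x₀ u ∧
          onlyNbr B w u ∧ (∀ c, B.Adj u c → c = x₀ ∨ c = w)
      · -- star case
        obtain ⟨x₀, w, hx₀, hw, hwx, hOx, hOw, hcov⟩ := hstar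
        obtain ⟨C⟩ := hBc
        obtain ⟨γ, hγv, -⟩ := pick2 hb (C v) (C v)
        obtain ⟨δ, hδγ, -⟩ := pick2 hb γ γ
        have hvx₀ : ¬ (v = x₀ ∨ v = w) := by
          rintro (rfl | rfl)
          · exact huvB hx₀
          · exact huvB hw
        refine ⟨SimpleGraph.Coloring.mk
          (fun t => if t = u then γ else if t = x₀ ∨ t = w then δ else C t) ?_⟩
        intro a c hac
        rcases supCases hac with hac | hac
        · by_cases hau : a = u
          · have hc2 : c = x₀ ∨ c = w := hcov c (hau ▸ hac)
            have hcu : c ≠ u := by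
              intro h
              rw [hau, h] at hac
              exact B.loopless.irrefl u hac
            rw [if_pos hau, if_neg hcu, if_pos hc2]
            exact fun h => hδγ h.symm
          · by_cases hcu : c = u
            · have ha2 : a = x₀ ∨ a = w := hcov a (hcu ▸ hac.symm)
              rw [if_pos hcu, if_neg hau, if_pos ha2]
              exact hδγ
            · have ha2 : ¬ (a = x₀ ∨ a = w) := by
                rintro (rfl | rfl)
                · exact hcu (hOx c hac)
                · exact hcu (hOw c hac)
              have hc2 : ¬ (c = x₀ ∨ c = w) := by
                rintro (rfl | rfl)
                · exact hau (hOx a hac.symm)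
                · exact hau (hOw a hac.symm)
              rw [if_neg hau, if_neg hcu, if_neg ha2, if_neg hc2]
              exact C.valid hac
        · rw [edge_adj] at hac
          rcases hac.1 with ⟨ha', hc'⟩ | ⟨ha', hc'⟩
          · rw [if_pos ha', hc', if_neg hvu, if_neg hvx₀]
            exact hγv
          · rw [ha', if_neg hvu, if_neg hvx₀, if_pos hc']
            exact fun h => hγv h.symm
      · -- spider case
        have hβ : ∀ t, B.Adj u t →
            ∃ z, B.Adj t z ∧ z ≠ u ∧ (∀ c, B.Adj t c → c = u ∨ c = z) ∧ onlyNbr B z t := by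
          intro t ht
          rcases hns t ht with hnSu | hnSx
          · -- ¬ Su t : derive the star configuration, contradiction
            exfalso
            push_neg at hnSu
            obtain ⟨w, hw, hwt, hA, hB'⟩ := hnSu
            have hA' : ∀ c, B.Adj u c → c ≠ w → c = t := by
              intro c hc hcw
              have h := hA c hc hcw
              by_contra hct
              exact hct h
            have hOw : onlyNbr B w u := by
              intro c hc
              have h := hB' c hc
              by_contra hcu
              exact hcu h
            rcases hns w hw with hnSuw | hnSxw
            · push_neg at hnSuw
              obtain ⟨w', hw', hw'w, hA2, hB2⟩ := hnSuw
              have hw't : w' = t := hA' w' hw' hw'w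
              have hOt : onlyNbr B w' u := by
                intro c hc
                have h := hB2 c hc
                by_contra hcu
                exact hcu h
              apply hstar
              refine ⟨w', w, hw't ▸ ht, hw, fun h => hw'w h.symm, hOt, hOw, ?_⟩
              intro c hc
              by_cases hcw' : c = w'
              · exact Or.inl hcw'
              · have h := hA2 c hc hcw'
                by_contra hcc
                push_neg at hcc
                exact hcc.2 h
            · exfalso
              apply hnSxw
              intro z hz hzu
              exact absurd (hOw z hz) hzu
          · push_neg at hnSx
            obtain ⟨z, hz, hzu, hA, hB'⟩ := hnSx
            refine ⟨z, hz, hzu, ?_, ?_⟩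
            · intro c hc
              by_cases hcz : c = z
              · exact Or.inr hcz
              · have h := hA c hc hcz
                by_contra hcc
                push_neg at hcc
                exact hcc.1 h
            · intro c hc
              have h := hB' c hc
              by_contra hct
              exact hct h
        obtain ⟨C⟩ := hBc
        obtain ⟨γ, hγv, -⟩ := pick2 hb (C v) (C v)
        choose z hz1 hz2 hz3 hz4 using hβ
        have hδex : ∀ t (h : B.Adj u t), ∃ d : Fin b, d ≠ γ ∧ d ≠ C (z t h) :=
          fun t h => pick2 hb γ (C (z t h))
        choose δ hδ1 hδ2 using hδex
        have hnz : ∀ t (h : B.Adj u t), ¬ B.Adj u (z t h) := by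
          intro t h hadj
          have h2 : u = t := hz4 t h u hadj.symm
          exact B.loopless.irrefl t (h2 ▸ h)
        refine ⟨SimpleGraph.Coloring.mk
          (fun t => if h : B.Adj u t then δ t h else if t = u then γ else C t) ?_⟩
        intro a c hac
        rcases supCases hac with hac | hac
        · by_cases hua : B.Adj u a
          · rcases hz3 a hua c hac with hcu | hcz
            · have huc : ¬ B.Adj u c := fun h => B.loopless.irrefl u (hcu ▸ h)
              rw [dif_pos hua, dif_neg huc, if_pos hcu]
              exact hδ1 a hua
            · have huc : ¬ B.Adj u c := fun h => hnz a hua (hcz ▸ h)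
              have hcu : c ≠ u := by
                intro h
                apply hz2 a hua
                rw [← hcz, h]
              rw [dif_pos hua, dif_neg huc, if_neg hcu, hcz]
              exact hδ2 a hua
          · by_cases huc : B.Adj u c
            · rcases hz3 c huc a hac.symm with hau | haz
              · have hua' : ¬ B.Adj u a := fun h => B.loopless.irrefl u (hau ▸ h)
                rw [dif_pos huc, dif_neg hua', if_pos hau]
                exact fun h => hδ1 c huc h.symm
              · have hau : a ≠ u := by
                  intro h
                  apply hz2 c huc
                  rw [← haz, h]
                rw [dif_pos huc, dif_neg hua, if_neg hau, haz]
                exact fun h => hδ2 c huc h.symm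
            · have hau : a ≠ u := fun h => huc (h ▸ hac)
              have hcu : c ≠ u := fun h => hua (h ▸ hac.symm)
              rw [dif_neg hua, dif_neg huc, if_neg hau, if_neg hcu]
              exact C.valid hac
        · rw [edge_adj] at hac
          rcases hac.1 with ⟨ha', hc'⟩ | ⟨ha', hc'⟩
          · rw [ha', hc', dif_neg (B.loopless.irrefl u), if_pos rfl, dif_neg huvB, if_neg hvu]
            exact hγv
          · rw [ha', hc', dif_neg (B.loopless.irrefl u), if_pos rfl, dif_neg huvB, if_neg hvu]
            exact fun h => hγv h.symm

lemma exists_step {V : Type*} [Fintype V] {G R B : SimpleGraph V} {r b : ℕ}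
    (hr : 3 ≤ r) (hb : 3 ≤ b) (hG : NoIsolatedEdge G)
    (hdisj : Disjoint R B) (hsup : R ⊔ B = G)
    (hRc : R.Colorable r) (hBc : B.Colorable b)
    (hne : (isoF R).Nonempty) :
    ∃ R' B' : SimpleGraph V, Disjoint R' B' ∧ R' ⊔ B' = G ∧
      R'.Colorable r ∧ B'.Colorable b ∧
      (isoF R').card + (isoF B').card < (isoF R).card + (isoF B).card := by
  classical
  obtain ⟨f, hf⟩ := hne
  induction f using Sym2.ind with
  | _ p q =>
    rw [mem_isoF] at hf
    have hpq : R.Adj p q := (mem_edgeSet _).1 hf.1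
    have hp : onlyNbr R p q := by
      intro c hc
      have h := hf.2 p (Sym2.mem_mk_left _ _) c hc
      rw [Sym2.mem_iff] at h
      rcases h with rfl | rfl
      · exact absurd rfl hc.ne
      · rfl
    have hq : onlyNbr R q p := by
      intro c hc
      have h := hf.2 q (Sym2.mem_mk_right _ _) c hc
      rw [Sym2.mem_iff] at h
      rcases h with rfl | rfl
      · rfl
      · exact absurd rfl hc.ne
    have hGpq : G.Adj p q := by
      rw [← hsup]
      exact supAdjL hpq
    rcases hG p q hGpq with ⟨x, ⟨hgx, hxq⟩ | ⟨hgx, hxp⟩⟩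
    · have hBx : B.Adj p x := by
        rw [← hsup] at hgx
        rcases supCases hgx with h | h
        · exact absurd (hp x h) hxq
        · exact h
      exact step_core hr hb hdisj hsup hRc hBc hpq hp hq hBx
    · have hBx : B.Adj q x := by
        rw [← hsup] at hgx
        rcases supCases hgx with h | h
        · exact absurd (hq x h) hxp
        · exact h
      have hres := step_core hr hb hdisj hsup hRc hBc hpq.symm hq hp hBx
      obtain ⟨R', B', h1, h2, h3, h4, h5⟩ := hres
      exact ⟨R', B', h1, h2, h3, h4, by rw [Sym2.eq_swap] at *; exact h5⟩

lemma descend {V : Type*} [Fintype V] (G : SimpleGraph V) (r b : ℕ)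
    (hr : 3 ≤ r) (hb : 3 ≤ b) (hG : NoIsolatedEdge G) :
    ∀ n (R B : SimpleGraph V), (isoF R).card + (isoF B).card ≤ n →
      Disjoint R B → R ⊔ B = G → R.Colorable r → B.Colorable b →
      ∃ R' B' : SimpleGraph V, Disjoint R' B' ∧ R' ⊔ B' = G ∧
        R'.Colorable r ∧ B'.Colorable b ∧ NoIsolatedEdge R' ∧ NoIsolatedEdge B' := by
  intro n
  induction n with
  | zero =>
    intro R B hn hdisj hsup hRc hBc
    have hR0 : isoF R = ∅ := Finset.card_eq_zero.1 (by omega)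
    have hB0 : isoF B = ∅ := Finset.card_eq_zero.1 (by omega)
    exact ⟨R, B, hdisj, hsup, hRc, hBc, noIso_of_empty hR0, noIso_of_empty hB0⟩
  | succ n ih =>
    intro R B hn hdisj hsup hRc hBc
    by_cases hR0 : isoF R = ∅
    · by_cases hB0 : isoF B = ∅
      · exact ⟨R, B, hdisj, hsup, hRc, hBc, noIso_of_empty hR0, noIso_of_empty hB0⟩
      · obtain ⟨B', R', hdisj', hsup', hBc', hRc', hlt⟩ :=
          exists_step hb hr hG hdisj.symm (by rw [sup_comm]; exact hsup) hBc hRc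
            (Finset.nonempty_iff_ne_empty.2 hB0)
        exact ih R' B' (by omega) hdisj'.symm (by rw [sup_comm]; exact hsup') hRc' hBc'
    · obtain ⟨R', B', hdisj', hsup', hRc', hBc', hlt⟩ :=
        exists_step hr hb hG hdisj hsup hRc hBc (Finset.nonempty_iff_ne_empty.2 hR0)
      exact ih R' B' (by omega) hdisj' hsup' hRc' hBc'

end IsoAux

/-- If the edges of a graph without isolated edges can be 2-coloured with the red
subgraph `r`-colourable and the blue subgraph `b`-colourable (`r, b ≥ 3`), then
this can be done so that no colour class contains an isolated edge. -/
theorem stmt_2 {V : Type*} [Fintype V] (G : SimpleGraph V) (r b : ℕ)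
    (hr : 3 ≤ r) (hb : 3 ≤ b) (hG : NoIsolatedEdge G)
    (R B : SimpleGraph V) (hdisj : Disjoint R B) (hsup : R ⊔ B = G)
    (hRc : R.Colorable r) (hBc : B.Colorable b) :
    ∃ R' B' : SimpleGraph V, Disjoint R' B' ∧ R' ⊔ B' = G ∧
      R'.Colorable r ∧ B'.Colorable b ∧
      NoIsolatedEdge R' ∧ NoIsolatedEdge B' := by
  exact descend G r b hr hb hG ((isoF R).card + (isoF B).card) R B le_rfl hdisj hsup hRc hBc
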